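/- Let δ ∈ (0,1), let h ≥ 3 and k be integers with ⌊h/3⌋ ≤ k ≤ h−2, suppose δ ≤ (3−(k−1)δ)/(h−k+1), and let α > 0 be real. Let R(h,δ,k) = {(s₁,…,s_k) ∈ ℝ^k : δ ≤ s₁ ≤ … ≤ s_k, s₁+…+s_k ≤ 1, s₁+…+s_{k−1}+(h−k+1)s_k ≤ 3, and s₁+…+s_k ≥ (h−k−3)/(h−k−1)}. Then ∫_{R(h,δ,k)} ds₁⋯ds_k/(s₁⋯s_k) ≤ [exp(−α·(h−k−3)/(h−k−1))/k!] · (∫_δ^{(3−(k−1)δ)/(h−k+1)} exp(αs)/s ds)^k. -/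

import Mathlib

open MeasureTheory

lemma measurableSet_monoSet {k : ℕ} : MeasurableSet {s : Fin k → ℝ | Monotone s} := by
  have : {s : Fin k → ℝ | Monotone s}
      = ⋂ (i) (j) (_ : i ≤ j), {s : Fin k → ℝ | s i ≤ s j} := by
    ext s; simp [Monotone, Set.mem_iInter]
  rw [this]
  exact .iInter fun i => .iInter fun j => .iInter fun _ =>
    measurableSet_le (measurable_pi_apply i) (measurable_pi_apply j)

lemma null_eq_coord {k : ℕ} {i j : Fin k} (hij : i ≠ j) :
    (volume : Measure (Fin k → ℝ)) {s | s i = s j} = 0 := by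
  have hW : {s : Fin k → ℝ | s i = s j}
      = (LinearMap.ker ((LinearMap.proj i : (Fin k → ℝ) →ₗ[ℝ] ℝ) - LinearMap.proj j) :
          Submodule ℝ (Fin k → ℝ)) := by
    ext s; simp [LinearMap.mem_ker, sub_eq_zero]
  rw [hW]
  refine Measure.addHaar_submodule _ _ ?_
  intro hT
  have hmem : Pi.single i (1 : ℝ) ∈
      LinearMap.ker ((LinearMap.proj i : (Fin k → ℝ) →ₗ[ℝ] ℝ) - LinearMap.proj j) := by
    rw [hT]; trivial
  simp [LinearMap.mem_ker, sub_eq_zero, Pi.single_eq_same,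
    Pi.single_eq_of_ne (Ne.symm hij)] at hmem

lemma symm_region_bound {k : ℕ} {g : ℝ → ℝ} (hg_int : Integrable g) (hg0 : ∀ x, 0 ≤ g x) :
    (k.factorial : ℝ) * (∫ s : Fin k → ℝ in {s | Monotone s}, ∏ i, g (s i))
      ≤ (∫ x, g x) ^ k := by
  set G : (Fin k → ℝ) → ℝ := fun s => ∏ i, g (s i) with hG
  have hGint : Integrable G := Integrable.fintype_prod (f := fun _ : Fin k => g) fun _ => hg_int
  have hG0 : ∀ s, 0 ≤ G s := fun s => Finset.prod_nonneg fun i _ => hg0 _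
  set M : Equiv.Perm (Fin k) → Set (Fin k → ℝ) :=
    fun σ => {s | Monotone fun i => s (σ i)} with hM
  have hMmeas : ∀ σ, MeasurableSet (M σ) := by
    intro σ
    have : M σ = (fun s : Fin k → ℝ => fun i => s (σ i)) ⁻¹' {s | Monotone s} := rfl
    rw [this]
    exact measurableSet_monoSet.preimage (measurable_pi_lambda _ fun i => measurable_pi_apply _)
  have hMone : M 1 = {s : Fin k → ℝ | Monotone s} := by
    simp [hM]
  -- each permuted region has the same integral
  have hMint : ∀ σ, ∫ s in M σ, G s = ∫ s in M 1, G s := by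
    intro σ
    set T : (Fin k → ℝ) ≃ᵐ (Fin k → ℝ) :=
      MeasurableEquiv.piCongrLeft (fun _ : Fin k => ℝ) σ.symm with hT
    have hTP : MeasurePreserving T volume volume :=
      volume_measurePreserving_piCongrLeft (fun _ : Fin k => ℝ) σ.symm
    have hTs : ∀ s i, T s i = s (σ i) := by
      intro s i
      have := Equiv.piCongrLeft_apply_apply (fun _ : Fin k => ℝ) σ.symm s (σ.symm.symm i)
      simpa [hT, MeasurableEquiv.coe_piCongrLeft] using this
    have hpre : T ⁻¹' (M 1) = M σ := by
      ext s
      simp only [Set.mem_preimage, hMone, hM, Set.mem_setOf_eq]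
      constructor
      · intro hmono
        have : (fun i => T s i) = fun i => s (σ i) := funext (hTs s)
        rw [← this]; exact hmono
      · intro hmono
        have : (fun i => T s i) = fun i => s (σ i) := funext (hTs s)
        show Monotone fun i => T s i
        rw [this]; exact hmono
    have hcomp : ∀ s, G (T s) = G s := by
      intro s
      simp only [hG]
      rw [show (∏ i, g (T s i)) = ∏ i, g (s (σ i)) from by simp [hTs]]
      exact Equiv.prod_comp σ fun i => g (s i)
    calc ∫ s in M σ, G s = ∫ s in T ⁻¹' (M 1), G (T s) := by
          rw [hpre]; exact setIntegral_congr_fun (hMmeas σ) fun s _ => (hcomp s).symm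
      _ = ∫ s in M 1, G s :=
          hTP.setIntegral_preimage_emb (MeasurableEquiv.measurableEmbedding T) _ _
  -- the bad diagonal set
  set D : Set (Fin k → ℝ) := ⋃ (i) (j) (_ : i ≠ j), {s | s i = s j} with hD
  have hDnull : volume D = 0 := by
    refine measure_iUnion_null fun i => measure_iUnion_null fun j => measure_iUnion_null fun hij =>
      null_eq_coord hij
  have hDmeas : MeasurableSet D :=
    .iUnion fun i => .iUnion fun j => .iUnion fun _ =>
      measurableSet_eq_fun (measurable_pi_apply i) (measurable_pi_apply j)
  -- off the diagonal, the permuted monotone regions are disjoint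
  have hdisj : Set.Pairwise (Finset.univ : Finset (Equiv.Perm (Fin k)))
      (Function.onFun Disjoint fun σ => M σ \ D) := by
    intro σ _ τ _ hστ
    rw [Function.onFun, Set.disjoint_left]
    rintro s ⟨hsσ, hsD⟩ ⟨hsτ, _⟩
    have hinj : Function.Injective s := by
      intro i j hij
      by_contra hne
      exact hsD (Set.mem_iUnion.2 ⟨i, Set.mem_iUnion.2 ⟨j, Set.mem_iUnion.2 ⟨hne, hij⟩⟩⟩)
    have hσm : StrictMono fun i => s (σ i) :=
      hsσ.strictMono_of_injective (hinj.comp σ.injective)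
    have hτm : StrictMono fun i => s (τ i) :=
      hsτ.strictMono_of_injective (hinj.comp τ.injective)
    have hrange : Set.range (fun i => s (σ i)) = Set.range fun i => s (τ i) := by
      rw [show (fun i => s (σ i)) = s ∘ σ from rfl, show (fun i => s (τ i)) = s ∘ τ from rfl,
        σ.surjective.range_comp, τ.surjective.range_comp]
    have inst : WellFoundedLT (Fin k) := inferInstance
    have heq : (fun i => s (σ i)) = fun i => s (τ i) :=
      @Set.range_injOn_strictMono (Fin k) ℝ _ _ inst _ hσm _ hτm hrange
    apply hστ
    ext i
    exact congrArg Fin.val (hinj (congrFun heq i))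
  calc (k.factorial : ℝ) * ∫ s in M 1, G s
      = ∑ σ : Equiv.Perm (Fin k), ∫ s in M σ, G s := by
        rw [Finset.sum_congr rfl fun σ _ => hMint σ, Finset.sum_const, Finset.card_univ,
          Fintype.card_perm, Fintype.card_fin, nsmul_eq_mul]
    _ = ∑ σ : Equiv.Perm (Fin k), ∫ s in M σ \ D, G s := by
        refine Finset.sum_congr rfl fun σ _ => ?_
        rw [Measure.restrict_congr_set (diff_ae_eq_self.2 (measure_mono_null
          Set.inter_subset_right hDnull))]
    _ = ∫ s in ⋃ σ ∈ (Finset.univ : Finset (Equiv.Perm (Fin k))), (M σ \ D), G s := by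
        rw [integral_biUnion_finset _ (fun σ _ => (hMmeas σ).diff hDmeas) hdisj
          fun σ _ => hGint.integrableOn]
    _ ≤ ∫ s, G s := setIntegral_le_integral hGint (Filter.Eventually.of_forall hG0)
    _ = (∫ x, g x) ^ k := by
        rw [hG, volume_pi]
        exact (integral_fintype_prod_eq_pow (ι := Fin k) g).trans (by rw [Fintype.card_fin])

/-- Let `δ ∈ (0,1)`, `h ≥ 3`, `⌊h/3⌋ ≤ k ≤ h−2` with
`δ ≤ (3−(k−1)δ)/(h−k+1)`, and `α > 0`.  With
`R(h,δ,k) = {s ∈ ℝ^k : δ ≤ s₁ ≤ ⋯ ≤ s_k, s₁+⋯+s_k ≤ 1,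
  s₁+⋯+s_{k−1}+(h−k+1)s_k ≤ 3, s₁+⋯+s_k ≥ (h−k−3)/(h−k−1)}`,
one has `∫_{R(h,δ,k)} ds/(s₁⋯s_k)
  ≤ exp(−α(h−k−3)/(h−k−1))/k! · (∫_δ^{(3−(k−1)δ)/(h−k+1)} exp(αs)/s ds)^k`. -/
theorem integral_second_region_bound (δ : ℝ) (hδ0 : 0 < δ) (hδ1 : δ < 1)
    (h : ℕ) (hh : 3 ≤ h) (k : ℕ) (hk1 : h / 3 ≤ k) (hk2 : k + 2 ≤ h)
    (hδk : δ ≤ (3 - ((k : ℝ) - 1) * δ) / ((h : ℝ) - (k : ℝ) + 1))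
    (α : ℝ) (hα : 0 < α) :
    (∫ s : Fin k → ℝ in
        {s | (∀ i, δ ≤ s i) ∧ Monotone s ∧ (∑ i, s i) ≤ 1 ∧
          (∑ i ∈ Finset.univ.filter (fun i : Fin k => (i : ℕ) < k - 1), s i)
            + ((h : ℝ) - (k : ℝ) + 1) * s ⟨k - 1, by omega⟩ ≤ 3 ∧
          ((h : ℝ) - (k : ℝ) - 3) / ((h : ℝ) - (k : ℝ) - 1) ≤ ∑ i, s i},
        ∏ i, (s i)⁻¹) ≤
      Real.exp (-α * (((h : ℝ) - (k : ℝ) - 3) / ((h : ℝ) - (k : ℝ) - 1))) /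
          (k.factorial : ℝ) *
        (∫ s in δ..((3 - ((k : ℝ) - 1) * δ) / ((h : ℝ) - (k : ℝ) + 1)),
          Real.exp (α * s) / s) ^ k := by
  have hk0 : 1 ≤ k := by omega
  have hlast : k - 1 < k := by omega
  set β : ℝ := (3 - ((k : ℝ) - 1) * δ) / ((h : ℝ) - (k : ℝ) + 1) with hβ
  set c : ℝ := ((h : ℝ) - (k : ℝ) - 3) / ((h : ℝ) - (k : ℝ) - 1) with hc
  set C : ℝ := Real.exp (-α * c) with hC
  have hC0 : 0 ≤ C := (Real.exp_pos _).le
  have hhk : (2 : ℝ) ≤ (h : ℝ) - (k : ℝ) := by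
    have : (k : ℝ) + 2 ≤ (h : ℝ) := by exact_mod_cast hk2
    linarith
  set S : Set (Fin k → ℝ) :=
    {s | (∀ i, δ ≤ s i) ∧ Monotone s ∧ (∑ i, s i) ≤ 1 ∧
      (∑ i ∈ Finset.univ.filter (fun i : Fin k => (i : ℕ) < k - 1), s i)
        + ((h : ℝ) - (k : ℝ) + 1) * s ⟨k - 1, hlast⟩ ≤ 3 ∧
      c ≤ ∑ i, s i} with hS
  set g : ℝ → ℝ := (Set.Icc δ β).indicator (fun x => Real.exp (α * x) / x) with hg
  have hg0 : ∀ x, 0 ≤ g x :=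
    fun x => Set.indicator_nonneg
      (fun y hy => div_nonneg (Real.exp_pos _).le (le_trans hδ0.le hy.1)) x
  have hg_int : Integrable g := by
    rw [hg, integrable_indicator_iff measurableSet_Icc]
    apply ContinuousOn.integrableOn_Icc
    exact ContinuousOn.div
      ((Real.continuous_exp.comp (continuous_const.mul continuous_id)).continuousOn)
      continuousOn_id (fun x hx => ne_of_gt (lt_of_lt_of_le hδ0 hx.1))
  have hg_eq : ∫ x, g x = ∫ x in δ..β, Real.exp (α * x) / x := by
    rw [hg, integral_indicator measurableSet_Icc, integral_Icc_eq_integral_Ioc,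
      intervalIntegral.integral_of_le hδk]
  set G : (Fin k → ℝ) → ℝ := fun s => ∏ i, g (s i) with hG
  have hGint : Integrable G := Integrable.fintype_prod (f := fun _ : Fin k => g) fun _ => hg_int
  have hG0 : ∀ s, 0 ≤ G s := fun s => Finset.prod_nonneg fun i _ => hg0 _
  -- the cardinality of the filter
  have hfilter : (Finset.univ.filter (fun i : Fin k => (i : ℕ) < k - 1)).card = k - 1 := by
    have : Finset.univ.filter (fun i : Fin k => (i : ℕ) < k - 1)
        = Finset.univ.erase ⟨k - 1, hlast⟩ := by
      ext i
      simp only [Finset.mem_filter, Finset.mem_univ, true_and, Finset.mem_erase, Fin.eq_mk_iff_val_eq]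
      have h1 := i.isLt
      rw [ne_eq, Fin.eq_mk_iff_val_eq, and_true]
      omega
    rw [this, Finset.card_erase_of_mem (Finset.mem_univ _), Finset.card_univ, Fintype.card_fin]
  -- coordinates on S lie in [δ, β]
  have hbox : ∀ s ∈ S, ∀ i, s i ∈ Set.Icc δ β := by
    rintro s ⟨hδs, hmono, -, hsum3, -⟩ i
    refine ⟨hδs i, ?_⟩
    have hle : s i ≤ s ⟨k - 1, hlast⟩ := by
      apply hmono
      rw [Fin.le_def]
      show (i : ℕ) ≤ k - 1
      have := i.isLt
      omega
    have hdsum : ((k : ℝ) - 1) * δ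
        ≤ ∑ i ∈ Finset.univ.filter (fun i : Fin k => (i : ℕ) < k - 1), s i := by
      have := Finset.card_nsmul_le_sum
        (Finset.univ.filter (fun i : Fin k => (i : ℕ) < k - 1)) s δ (fun i _ => hδs i)
      rw [hfilter, nsmul_eq_mul] at this
      have hcast : ((k - 1 : ℕ) : ℝ) = (k : ℝ) - 1 := by
        push_cast [Nat.cast_sub hk0]; ring
      linarith [this, hcast ▸ this]
    have hslast : s ⟨k - 1, hlast⟩ ≤ β := by
      rw [hβ, le_div_iff₀ (by linarith : (0:ℝ) < (h : ℝ) - (k : ℝ) + 1)]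
      nlinarith [hsum3, hdsum]
    linarith
  -- the pointwise bound on S
  have hpt : ∀ s ∈ S, (∏ i, (s i)⁻¹) ≤ C * G s := by
    intro s hsS
    have hb := hbox s hsS
    obtain ⟨hδs, -, -, -, hcs⟩ := hsS
    have hpos : ∀ i, (0:ℝ) < s i := fun i => lt_of_lt_of_le hδ0 (hδs i)
    have hginv : ∀ i, g (s i) = Real.exp (α * s i) * (s i)⁻¹ := by
      intro i
      rw [hg, Set.indicator_of_mem (hb i), div_eq_mul_inv]
    have hP0 : (0:ℝ) ≤ ∏ i, (s i)⁻¹ :=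
      Finset.prod_nonneg fun i _ => inv_nonneg.2 (hpos i).le
    have hCG : C * G s = Real.exp (α * (∑ i, s i) - α * c) * ∏ i, (s i)⁻¹ := by
      rw [hC, hG]
      simp only [hginv]
      rw [Finset.prod_mul_distrib, ← Real.exp_sum, ← mul_assoc, ← Real.exp_add,
        ← Finset.mul_sum]
      ring_nf
    rw [hCG]
    have h1 : (1:ℝ) ≤ Real.exp (α * (∑ i, s i) - α * c) :=
      Real.one_le_exp (by nlinarith [hcs])
    nlinarith [h1, hP0]
  -- measurability of S
  have hSmeas : MeasurableSet S := by
    rw [hS]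
    simp only [Set.setOf_and]
    refine MeasurableSet.inter ?_ (MeasurableSet.inter measurableSet_monoSet
      (MeasurableSet.inter ?_ (MeasurableSet.inter ?_ ?_)))
    · rw [Set.setOf_forall]
      exact .iInter fun i => measurableSet_le measurable_const (measurable_pi_apply i)
    · exact measurableSet_le (Finset.measurable_sum _ fun i _ => measurable_pi_apply i)
        measurable_const
    · exact measurableSet_le
        ((Finset.measurable_sum _ fun i _ => measurable_pi_apply i).add
          ((measurable_pi_apply _).const_mul _)) measurable_const
    · exact measurableSet_le measurable_const
        (Finset.measurable_sum _ fun i _ => measurable_pi_apply i)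
  have hSsub : S ≤ {s : Fin k → ℝ | Monotone s} := fun s hs => hs.2.1
  calc ∫ s in S, ∏ i, (s i)⁻¹
      ≤ ∫ s in S, C * G s := by
        apply integral_mono_of_nonneg
        · filter_upwards [ae_restrict_mem hSmeas] with s hs
          exact Finset.prod_nonneg fun i _ =>
            inv_nonneg.2 (le_trans hδ0.le (hs.1 i))
        · exact (hGint.const_mul C).restrict
        · filter_upwards [ae_restrict_mem hSmeas] with s hs
          exact hpt s hs
    _ ≤ ∫ s in {s : Fin k → ℝ | Monotone s}, C * G s := by
        apply setIntegral_mono_set ((hGint.const_mul C).integrableOn)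
        · exact Filter.Eventually.of_forall fun s => mul_nonneg hC0 (hG0 s)
        · exact HasSubset.Subset.eventuallyLE hSsub
    _ = C * ∫ s in {s : Fin k → ℝ | Monotone s}, G s := integral_const_mul _ _
    _ ≤ C * ((∫ x, g x) ^ k / (k.factorial : ℝ)) := by
        refine mul_le_mul_of_nonneg_left ?_ hC0
        rw [le_div_iff₀ (by positivity : (0:ℝ) < (k.factorial : ℝ)), mul_comm]
        exact symm_region_bound hg_int hg0
    _ = C / (k.factorial : ℝ) * (∫ x in δ..β, Real.exp (α * x) / x) ^ k := by
        rw [hg_eq]; ring
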